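/- Let d ≥ 2 be an integer, α ∈ (1,2), and β ∈ ((d+α)/2, d). Let ψ(x) = Γ'(x)/Γ(x) denote the digamma function, where Γ is the real Gamma function and Γ' its derivative. Then ψ((d−β)/2) − ψ((d+α−β)/2) + ψ(β/2) − ψ((β−α)/2) < 0. -/

import Mathlib

open Real Set Filter Topology

/-- The digamma function `ψ(x) = Γ'(x)/Γ(x)`, where `Γ` is the real Gamma function. -/
noncomputable def digamma (x : ℝ) : ℝ := deriv Real.Gamma x / Real.Gamma x

private lemma gammaDiffAt {x : ℝ} (hx : 0 < x) : DifferentiableAt ℝ Real.Gamma x :=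
  Real.differentiableAt_Gamma fun m =>
    ((neg_nonpos.mpr (Nat.cast_nonneg m)).trans_lt hx).ne'

private lemma deriv_log_gamma {x : ℝ} (hx : 0 < x) :
    deriv (Real.log ∘ Real.Gamma) x = digamma x :=
  deriv.log (gammaDiffAt hx) (Real.Gamma_pos_of_pos hx).ne'

/-- digamma is monotone on positive reals. -/
private lemma digamma_mono {x y : ℝ} (hx : 0 < x) (hxy : x ≤ y) :
    digamma x ≤ digamma y := by
  have hy : 0 < y := lt_of_lt_of_le hx hxy
  have hmono := Real.convexOn_log_Gamma.monotoneOn_deriv (fun z hz => by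
    have hz' : (0:ℝ) < z := hz
    exact (gammaDiffAt hz').log (Real.Gamma_pos_of_pos hz').ne')
  have := hmono (mem_Ioi.mpr hx) (mem_Ioi.mpr hy) hxy
  rwa [deriv_log_gamma hx, deriv_log_gamma hy] at this

/-- The recurrence ψ(x+1) = ψ(x) + 1/x. -/
private lemma digamma_add_one {x : ℝ} (hx : 0 < x) :
    digamma (x + 1) = digamma x + 1 / x := by
  have hΓ : HasDerivAt Real.Gamma (deriv Real.Gamma x) x := (gammaDiffAt hx).hasDerivAt
  have hx1 : (0:ℝ) < x + 1 := by linarith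
  have h1 : HasDerivAt (fun y => Real.Gamma (y + 1)) (deriv Real.Gamma (x + 1)) x := by
    have := ((gammaDiffAt hx1).hasDerivAt).comp x ((hasDerivAt_id x).add_const 1)
    simpa [Function.comp_def] using this
  have h2 : HasDerivAt (fun y => y * Real.Gamma y)
      (1 * Real.Gamma x + x * deriv Real.Gamma x) x := (hasDerivAt_id x).mul hΓ
  have heq : (fun y => Real.Gamma (y + 1)) =ᶠ[𝓝 x] fun y => y * Real.Gamma y := by
    filter_upwards [eventually_gt_nhds hx] with y hy
    exact Real.Gamma_add_one hy.ne'
  have h1' : HasDerivAt (fun y => y * Real.Gamma y) (deriv Real.Gamma (x + 1)) x :=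
    h1.congr_of_eventuallyEq heq.symm
  have hder : deriv Real.Gamma (x + 1) = 1 * Real.Gamma x + x * deriv Real.Gamma x :=
    h1'.unique h2
  have hΓx : Real.Gamma x ≠ 0 := (Real.Gamma_pos_of_pos hx).ne'
  have hΓx1 : Real.Gamma (x + 1) = x * Real.Gamma x := Real.Gamma_add_one hx.ne'
  rw [digamma, digamma, hder, hΓx1]
  field_simp
  ring

/-- ψ(y + m) - ψ(y) ≤ m / y for natural m. -/
private lemma digamma_add_nat_le {y : ℝ} (hy : 0 < y) (m : ℕ) :
    digamma (y + m) - digamma y ≤ m / y := by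
  induction m with
  | zero => simp
  | succ n ih =>
    have hyn : 0 < y + n := by positivity
    have h1 : digamma (y + (n + 1 : ℕ)) = digamma (y + n) + 1 / (y + n) := by
      have := digamma_add_one hyn
      push_cast
      rw [show y + ((n : ℝ) + 1) = y + n + 1 by ring, this]

    have h2 : 1 / (y + n) ≤ 1 / y := by
      apply one_div_le_one_div_of_le hy; linarith [Nat.cast_nonneg (α := ℝ) n]
    have : ((n : ℝ) + 1) / y = n / y + 1 / y := by ring
    push_cast
    rw [this] at *
    push_cast at h1
    linarith [h1]

/-- ψ(x + n + h) - ψ(x + n) → 0 as n → ∞. -/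
private lemma digamma_shift_tendsto {x h : ℝ} (hx : 0 < x) (hh : 0 < h) :
    Tendsto (fun n : ℕ => digamma (x + n + h) - digamma (x + n)) atTop (𝓝 0) := by
  set m : ℕ := ⌈h⌉₊ with hm
  have hhm : h ≤ m := Nat.le_ceil h
  have hub : ∀ n : ℕ, digamma (x + n + h) - digamma (x + n) ≤ m / (x + n) := by
    intro n
    have hxn : 0 < x + n := by positivity
    have h1 : digamma (x + n + h) ≤ digamma (x + n + m) :=
      digamma_mono (by linarith) (by linarith)
    have h2 := digamma_add_nat_le hxn m
    linarith
  have hlb : ∀ n : ℕ, 0 ≤ digamma (x + n + h) - digamma (x + n) := by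
    intro n
    have hxn : 0 < x + n := by positivity
    have := digamma_mono hxn (by linarith : x + n ≤ x + n + h)
    linarith
  have htend : Tendsto (fun n : ℕ => (m : ℝ) / (x + n)) atTop (𝓝 0) := by
    apply Tendsto.div_atTop tendsto_const_nhds
    exact tendsto_atTop_add_const_left atTop x tendsto_natCast_atTop_atTop
  exact squeeze_zero hlb hub htend

/-- Telescoping identity: ψ(a+h) - ψ(a) = (ψ(a+n+h) - ψ(a+n)) + ∑_{k<n} (1/(a+k) - 1/(a+k+h)). -/
private lemma digamma_telescope {a h : ℝ} (ha : 0 < a) (hh : 0 < h) (n : ℕ) :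
    digamma (a + h) - digamma a =
      (digamma (a + n + h) - digamma (a + n)) +
        ∑ k ∈ Finset.range n, (1 / (a + k) - 1 / (a + k + h)) := by
  induction n with
  | zero => simp
  | succ n ih =>
    have hak : 0 < a + n := by positivity
    have hakh : 0 < a + n + h := by linarith
    have e1 := digamma_add_one hak
    have e2 := digamma_add_one hakh
    rw [Finset.sum_range_succ]
    have c1 : a + (n + 1 : ℕ) + h = a + n + h + 1 := by push_cast; ring
    have c2 : a + ((n : ℕ) + 1 : ℕ) = a + n + 1 := by push_cast; ring
    rw [c1, c2, e1, e2, ih]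
    ring

/-- Key inequality: the increment of digamma over an interval of length h strictly decreases. -/
private lemma digamma_increment_strict_anti {a b h : ℝ} (ha : 0 < a) (hab : a < b)
    (hh : 0 < h) :
    digamma (b + h) - digamma b < digamma (a + h) - digamma a := by
  have hb : 0 < b := ha.trans hab
  set D : ℝ := (digamma (a + h) - digamma a) - (digamma (b + h) - digamma b) with hD
  set S : ℕ → ℝ := fun n => ∑ k ∈ Finset.range n,
    ((1 / (a + k) - 1 / (a + k + h)) - (1 / (b + k) - 1 / (b + k + h))) with hS
  -- term-wise nonnegativity / strict positivity of first term
  have hterm : ∀ k : ℕ, ∀ {u v : ℝ}, 0 < u → u ≤ v →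
      1 / (v + k) - 1 / (v + k + h) ≤ 1 / (u + k) - 1 / (u + k + h) := by
    intro k u v hu huv
    have hu' : 0 < u + k := by positivity
    have hv' : 0 < v + k := by linarith
    have e1 : 1 / (u + k) - 1 / (u + k + h) = h / ((u + k) * (u + k + h)) := by
      field_simp; ring
    have e2 : 1 / (v + k) - 1 / (v + k + h) = h / ((v + k) * (v + k + h)) := by
      field_simp; ring
    rw [e1, e2]
    have hlt : (u + k) * (u + k + h) ≤ (v + k) * (v + k + h) := by nlinarith
    exact div_le_div_of_nonneg_left hh.le (by positivity) hlt
  have hterm0 : 1 / b - 1 / (b + h) < 1 / a - 1 / (a + h) := by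
    have e1 : 1 / a - 1 / (a + h) = h / (a * (a + h)) := by
      field_simp; ring
    have e2 : 1 / b - 1 / (b + h) = h / (b * (b + h)) := by
      field_simp; ring
    rw [e1, e2]
    have hlt : a * (a + h) < b * (b + h) := by nlinarith
    exact div_lt_div_of_pos_left hh (by positivity) hlt
  -- S n tends to D
  have hSD : Tendsto S atTop (𝓝 D) := by
    have hEa := digamma_shift_tendsto ha hh
    have hEb := digamma_shift_tendsto hb hh
    have hid : ∀ n : ℕ, S n = D - ((digamma (a + n + h) - digamma (a + n)) -
        (digamma (b + n + h) - digamma (b + n))) := by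
      intro n
      have ta := digamma_telescope ha hh n
      have tb := digamma_telescope hb hh n
      have hsplit : S n = (∑ k ∈ Finset.range n, (1 / (a + k) - 1 / (a + k + h))) -
          ∑ k ∈ Finset.range n, (1 / (b + k) - 1 / (b + k + h)) := by
        simp only [hS, Finset.sum_sub_distrib]
      rw [hsplit]
      have ta' : (∑ k ∈ Finset.range n, (1 / (a + k) - 1 / (a + k + h))) =
          (digamma (a + h) - digamma a) - (digamma (a + n + h) - digamma (a + n)) := by
        linarith
      have tb' : (∑ k ∈ Finset.range n, (1 / (b + k) - 1 / (b + k + h))) =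
          (digamma (b + h) - digamma b) - (digamma (b + n + h) - digamma (b + n)) := by
        linarith
      rw [ta', tb', hD]; ring
    have h0 : Tendsto (fun n : ℕ => D - ((digamma (a + n + h) - digamma (a + n)) -
        (digamma (b + n + h) - digamma (b + n)))) atTop (𝓝 (D - (0 - 0))) :=
      tendsto_const_nhds.sub (hEa.sub hEb)
    simp only [sub_zero] at h0
    exact h0.congr fun n => (hid n).symm
  -- S n ≥ first term for n ≥ 1
  have hSlb : ∀ n : ℕ, 1 ≤ n → (1 / a - 1 / (a + h)) - (1 / b - 1 / (b + h)) ≤ S n := by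
    intro n hn
    have h0 : ∀ k ∈ Finset.range n,
        0 ≤ (1 / (a + k) - 1 / (a + k + h)) - (1 / (b + k) - 1 / (b + k + h)) := by
      intro k _
      have := hterm k ha hab.le
      linarith
    have hsingle : (1 / (a + (0:ℕ)) - 1 / (a + (0:ℕ) + h)) -
        (1 / (b + (0:ℕ)) - 1 / (b + (0:ℕ) + h)) ≤ S n := by
      rw [hS]
      exact Finset.single_le_sum h0 (Finset.mem_range.mpr hn)
    simpa using hsingle
  have hDlb : (1 / a - 1 / (a + h)) - (1 / b - 1 / (b + h)) ≤ D := by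
    refine ge_of_tendsto hSD ?_
    filter_upwards [eventually_ge_atTop 1] with n hn using hSlb n hn
  have : 0 < D := lt_of_lt_of_le (by linarith) hDlb
  rw [hD] at this
  linarith

/-- For `d ≥ 2`, `α ∈ (1,2)` and `β ∈ ((d+α)/2, d)` one has
`ψ((d−β)/2) − ψ((d+α−β)/2) + ψ(β/2) − ψ((β−α)/2) < 0`. -/
theorem digamma_combination_neg (d : ℕ) (hd : 2 ≤ d) (α β : ℝ)
    (hα₁ : 1 < α) (hα₂ : α < 2)
    (hβ₁ : ((d : ℝ) + α) / 2 < β) (hβ₂ : β < d) :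
    digamma (((d : ℝ) - β) / 2) - digamma (((d : ℝ) + α - β) / 2) +
      digamma (β / 2) - digamma ((β - α) / 2) < 0 := by
  have hd2 : (2 : ℝ) ≤ d := by exact_mod_cast hd
  have ha : 0 < ((d : ℝ) - β) / 2 := by linarith
  have hab : ((d : ℝ) - β) / 2 < (β - α) / 2 := by linarith
  have hh : 0 < α / 2 := by linarith
  have key := digamma_increment_strict_anti ha hab hh
  have e1 : ((d : ℝ) - β) / 2 + α / 2 = ((d : ℝ) + α - β) / 2 := by ring
  have e2 : (β - α) / 2 + α / 2 = β / 2 := by ring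
  rw [e1, e2] at key
  linarith
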